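/- Let w₁, w₂ ∈ ℝ^d, v₁, v₂ ∈ ℝ, M ∈ ℝ, and let A₁, A₂ be symmetric positive semidefinite d×d matrices. Then for every φ ∈ ℝ^d with ‖φ‖₂ ≤ 1, | min(w₁ᵀφ + v₁ + √(φᵀA₁φ), M) − min(w₂ᵀφ + v₂ + √(φᵀA₂φ), M) | ≤ ‖w₁ − w₂‖₂ + |v₁ − v₂| + √(‖A₁ − A₂‖_F), where ‖·‖_F denotes the Frobenius norm. -/

import Mathlib

open Matrix Finset

private lemma abs_sqrt_sub_sqrt (x y : ℝ) (hx : 0 ≤ x) (hy : 0 ≤ y) :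
    |Real.sqrt x - Real.sqrt y| ≤ Real.sqrt |x - y| := by
  wlog h : y ≤ x generalizing x y
  · rw [abs_sub_comm, abs_sub_comm x y]; exact this y x hy hx (le_of_not_ge h)
  have hxy : 0 ≤ x - y := by linarith
  rw [abs_of_nonneg (by rw [sub_nonneg]; exact Real.sqrt_le_sqrt h),
    abs_of_nonneg hxy, sub_le_iff_le_add]
  have h1 : x ≤ (Real.sqrt (x - y) + Real.sqrt y) ^ 2 := by
    nlinarith [Real.sq_sqrt hxy, Real.sq_sqrt hy, Real.sqrt_nonneg (x - y),
      Real.sqrt_nonneg y]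
  have h2 := Real.sqrt_le_sqrt h1
  rwa [Real.sqrt_sq (by positivity)] at h2

private lemma abs_sum_le_sqrt {d : ℕ} (f g : Fin d → ℝ) :
    |∑ j, f j * g j| ≤ Real.sqrt (∑ j, f j ^ 2) * Real.sqrt (∑ j, g j ^ 2) := by
  rw [abs_le]
  constructor
  · have h := Real.sum_mul_le_sqrt_mul_sqrt Finset.univ (fun j => -f j) g
    simp only [neg_mul, Finset.sum_neg_distrib, neg_sq] at h
    linarith
  · exact Real.sum_mul_le_sqrt_mul_sqrt Finset.univ f g

/-- Key estimate for the covering-number bound: for `w₁, w₂ ∈ ℝ^d`, `v₁, v₂, M ∈ ℝ`,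
symmetric positive semidefinite matrices `A₁, A₂`, and `‖φ‖₂ ≤ 1`,
`|min(w₁ᵀφ + v₁ + √(φᵀA₁φ), M) − min(w₂ᵀφ + v₂ + √(φᵀA₂φ), M)|
  ≤ ‖w₁ − w₂‖₂ + |v₁ − v₂| + √‖A₁ − A₂‖_F`. -/
theorem stmt_10 (d : ℕ) (w1 w2 : Fin d → ℝ) (v1 v2 M : ℝ)
    (A1 A2 : Matrix (Fin d) (Fin d) ℝ) (h1 : A1.PosSemidef) (h2 : A2.PosSemidef)
    (φ : Fin d → ℝ) (hφ : Real.sqrt (∑ j, φ j ^ 2) ≤ 1) :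
    |min (w1 ⬝ᵥ φ + v1 + Real.sqrt (φ ⬝ᵥ (A1 *ᵥ φ))) M -
      min (w2 ⬝ᵥ φ + v2 + Real.sqrt (φ ⬝ᵥ (A2 *ᵥ φ))) M| ≤
    Real.sqrt (∑ j, (w1 j - w2 j) ^ 2) + |v1 - v2| +
      Real.sqrt (Real.sqrt (∑ i, ∑ j, (A1 i j - A2 i j) ^ 2)) := by
  have hφ2 : ∑ j, φ j ^ 2 ≤ 1 := by
    have h0 : (0:ℝ) ≤ ∑ j, φ j ^ 2 := Finset.sum_nonneg fun _ _ => sq_nonneg _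
    nlinarith [Real.sq_sqrt h0, Real.sqrt_nonneg (∑ j, φ j ^ 2)]
  -- nonnegativity of quadratic forms
  have hq1 : 0 ≤ φ ⬝ᵥ (A1 *ᵥ φ) := by
    have := h1.dotProduct_mulVec_nonneg φ; simpa using this
  have hq2 : 0 ≤ φ ⬝ᵥ (A2 *ᵥ φ) := by
    have := h2.dotProduct_mulVec_nonneg φ; simpa using this
  -- Frobenius bound of the quadratic form difference
  have key : |φ ⬝ᵥ (A1 *ᵥ φ) - φ ⬝ᵥ (A2 *ᵥ φ)| ≤
      Real.sqrt (∑ i, ∑ j, (A1 i j - A2 i j) ^ 2) := by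
    have hdiff : φ ⬝ᵥ (A1 *ᵥ φ) - φ ⬝ᵥ (A2 *ᵥ φ)
        = ∑ i, φ i * (∑ j, (A1 i j - A2 i j) * φ j) := by
      simp only [dotProduct, Matrix.mulVec, ← Finset.sum_sub_distrib]
      refine Finset.sum_congr rfl fun i _ => ?_
      rw [Finset.mul_sum, Finset.mul_sum, Finset.mul_sum, ← Finset.sum_sub_distrib]
      exact Finset.sum_congr rfl fun j _ => by ring
    rw [hdiff]
    calc |∑ i, φ i * (∑ j, (A1 i j - A2 i j) * φ j)|
        ≤ Real.sqrt (∑ i, φ i ^ 2) *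
          Real.sqrt (∑ i, (∑ j, (A1 i j - A2 i j) * φ j) ^ 2) :=
          abs_sum_le_sqrt _ _
      _ ≤ 1 * Real.sqrt (∑ i, ∑ j, (A1 i j - A2 i j) ^ 2) := by
          apply mul_le_mul hφ ?_ (Real.sqrt_nonneg _) zero_le_one
          apply Real.sqrt_le_sqrt
          calc ∑ i, (∑ j, (A1 i j - A2 i j) * φ j) ^ 2
              ≤ ∑ i, (∑ j, (A1 i j - A2 i j) ^ 2) * (∑ j, φ j ^ 2) := by
                apply Finset.sum_le_sum
                intro i _
                exact Finset.sum_mul_sq_le_sq_mul_sq _ _ _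
            _ ≤ ∑ i, (∑ j, (A1 i j - A2 i j) ^ 2) * 1 := by
                apply Finset.sum_le_sum
                intro i _
                exact mul_le_mul_of_nonneg_left hφ2
                  (Finset.sum_nonneg fun _ _ => sq_nonneg _)
            _ = ∑ i, ∑ j, (A1 i j - A2 i j) ^ 2 := by simp
      _ = Real.sqrt (∑ i, ∑ j, (A1 i j - A2 i j) ^ 2) := one_mul _
  -- dot product bound
  have hw : |w1 ⬝ᵥ φ - w2 ⬝ᵥ φ| ≤ Real.sqrt (∑ j, (w1 j - w2 j) ^ 2) := by
    have : w1 ⬝ᵥ φ - w2 ⬝ᵥ φ = ∑ j, (w1 j - w2 j) * φ j := by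
      simp only [dotProduct, ← Finset.sum_sub_distrib, sub_mul]
    rw [this]
    calc |∑ j, (w1 j - w2 j) * φ j|
        ≤ Real.sqrt (∑ j, (w1 j - w2 j) ^ 2) * Real.sqrt (∑ j, φ j ^ 2) :=
          abs_sum_le_sqrt _ _
      _ ≤ Real.sqrt (∑ j, (w1 j - w2 j) ^ 2) * 1 :=
          mul_le_mul_of_nonneg_left hφ (Real.sqrt_nonneg _)
      _ = _ := mul_one _
  have hs : |Real.sqrt (φ ⬝ᵥ (A1 *ᵥ φ)) - Real.sqrt (φ ⬝ᵥ (A2 *ᵥ φ))| ≤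
      Real.sqrt (Real.sqrt (∑ i, ∑ j, (A1 i j - A2 i j) ^ 2)) :=
    (abs_sqrt_sub_sqrt _ _ hq1 hq2).trans (Real.sqrt_le_sqrt key)
  have hmin := abs_min_sub_min_le_max (w1 ⬝ᵥ φ + v1 + Real.sqrt (φ ⬝ᵥ (A1 *ᵥ φ))) M
    (w2 ⬝ᵥ φ + v2 + Real.sqrt (φ ⬝ᵥ (A2 *ᵥ φ))) M
  simp only [sub_self, abs_zero] at hmin
  refine hmin.trans ?_
  rw [max_le_iff]
  constructor
  · calc |w1 ⬝ᵥ φ + v1 + Real.sqrt (φ ⬝ᵥ (A1 *ᵥ φ)) -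
        (w2 ⬝ᵥ φ + v2 + Real.sqrt (φ ⬝ᵥ (A2 *ᵥ φ)))|
        ≤ |w1 ⬝ᵥ φ - w2 ⬝ᵥ φ| + |v1 - v2| +
          |Real.sqrt (φ ⬝ᵥ (A1 *ᵥ φ)) - Real.sqrt (φ ⬝ᵥ (A2 *ᵥ φ))| := by
          have := abs_add_le (w1 ⬝ᵥ φ - w2 ⬝ᵥ φ + (v1 - v2))
            (Real.sqrt (φ ⬝ᵥ (A1 *ᵥ φ)) - Real.sqrt (φ ⬝ᵥ (A2 *ᵥ φ)))
          have h2 := abs_add_le (w1 ⬝ᵥ φ - w2 ⬝ᵥ φ) (v1 - v2)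
          have heq : w1 ⬝ᵥ φ + v1 + Real.sqrt (φ ⬝ᵥ (A1 *ᵥ φ)) -
              (w2 ⬝ᵥ φ + v2 + Real.sqrt (φ ⬝ᵥ (A2 *ᵥ φ))) =
              w1 ⬝ᵥ φ - w2 ⬝ᵥ φ + (v1 - v2) +
              (Real.sqrt (φ ⬝ᵥ (A1 *ᵥ φ)) - Real.sqrt (φ ⬝ᵥ (A2 *ᵥ φ))) := by ring
          rw [heq]; linarith
      _ ≤ _ := by linarith
  · positivity
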